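/- Quasi-matrix multiplication in the ideal M̃^(1): for all a,b,i,j,k,l,p,q ∈ {S,A}, Ĝ^(1)_{[ab][ij]} Ĝ^(1)_{[kl][pq]} = δ_{ik} δ_{jl} b_{ij} Ĝ^(1)_{[ab][pq]}, where the Gram coefficients are b_{SS} = (d+2)/(4d), b_{SA} = b_{AS} = 1/4, b_{AA} = (d−2)/(4d). Equivalently, Q^(1) (E_i⊗E_j) Q^(1) = b_{ij} Q^(1) for all i,j ∈ {S,A}. -/

import Mathlib

open Matrix Kronecker

namespace WBA

/-- Configurations of `p` qudits of local dimension `d`. -/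
abbrev Conf (d p : ℕ) := Fin p → Fin d

/-- Operators on `H = (ℂ^d)^{⊗ 2p}`, indexed by pairs (unprimed configuration, primed
configuration). -/
abbrev Op (d p : ℕ) := Matrix (Conf d p × Conf d p) (Conf d p × Conf d p) ℂ

/-- The projector `P⁺_{a,c'}` onto the maximally entangled state between unprimed system `a`
and primed system `c`, tensored with the identity elsewhere. -/
noncomputable def Pplus (d p : ℕ) (a c : Fin p) : Op d p :=
  Matrix.of fun xy uv =>
    if xy.1 a = xy.2 c ∧ uv.1 a = uv.2 c ∧ (∀ j, j ≠ a → xy.1 j = uv.1 j) ∧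
        (∀ j, j ≠ c → xy.2 j = uv.2 j) then
      (d : ℂ)⁻¹
    else 0

/-- `d • P⁺_{a,c'}`, i.e. the partially transposed swap `V^{t_{c'}}_{(a,c')}`. -/
noncomputable def arc (d p : ℕ) (a c : Fin p) : Op d p := (d : ℂ) • Pplus d p a c

/-- `V^(k) = ∏_{j=p-k+1}^{p} (d • P⁺_{j,j'})` (product over the last `k` systems;
`V^(0) = 1`). -/
noncomputable def Vop (d p k : ℕ) : Op d p :=
  (((List.range p).filter (fun j => decide (p - k ≤ j))).map
    (fun j => if h : j < p then arc d p ⟨j, h⟩ ⟨j, h⟩ else 1)).prod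

/-- `Q^(p) = d^{-p} V^(p)` and `Q^(k) = d^{-k} V^(k) - d^{-(k+1)} V^(k+1)` for `k < p`. -/
noncomputable def Qop (d p k : ℕ) : Op d p :=
  if k = p then ((d : ℂ) ^ p)⁻¹ • Vop d p p
  else ((d : ℂ) ^ k)⁻¹ • Vop d p k - ((d : ℂ) ^ (k + 1))⁻¹ • Vop d p (k + 1)

/-- Permutation matrix on `(ℂ^d)^{⊗ n}`: sends `e_v` to `e_{v ∘ σ⁻¹}`. -/
noncomputable def permMat (d n : ℕ) (σ : Equiv.Perm (Fin n)) :
    Matrix (Fin n → Fin d) (Fin n → Fin d) ℂ :=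
  Matrix.of fun x u => if x = u ∘ ⇑σ⁻¹ then 1 else 0

/-- `V_σ`: permutation of the unprimed factors, identity on the primed factors. -/
noncomputable def VL (d p : ℕ) (σ : Equiv.Perm (Fin p)) : Op d p :=
  (permMat d p σ) ⊗ₖ (1 : Matrix (Conf d p) (Conf d p) ℂ)

/-- `V'_τ`: permutation of the primed factors, identity on the unprimed factors. -/
noncomputable def VR (d p : ℕ) (τ : Equiv.Perm (Fin p)) : Op d p :=
  (1 : Matrix (Conf d p) (Conf d p) ℂ) ⊗ₖ (permMat d p τ)

/-- Identification of `H` with `(ℂ^d)^{⊗ (p+p)}`. -/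
def glue (d p : ℕ) : (Conf d p × Conf d p) ≃ (Fin (p + p) → Fin d) :=
  (Equiv.sumArrowEquivProdArrow (Fin p) (Fin p) (Fin d)).symm.trans
    (Equiv.arrowCongr finSumFinEquiv (Equiv.refl (Fin d)))

/-- The permutation operator `W_π`, `π ∈ S_{2p}`, permuting all `2p` tensor factors of `H`. -/
noncomputable def Wfull (d p : ℕ) (π : Equiv.Perm (Fin (p + p))) : Op d p :=
  (permMat d (p + p) π).submatrix (glue d p) (glue d p)

/-- Partial transpose over the `p` primed factors:
`⟨x,y|M^Γ|u,v⟩ = ⟨x,v|M|u,y⟩`. -/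
noncomputable def ptrans (d p : ℕ) (M : Op d p) : Op d p :=
  Matrix.of fun xy uv => M (xy.1, uv.2) (uv.1, xy.2)

/-- The algebra `A^d_{p,p}` of partially transposed permutation operators, as a
linear subspace of `End(H)`. -/
noncomputable def Apt (d p : ℕ) : Submodule ℂ (Op d p) :=
  Submodule.span ℂ {M | ∃ π : Equiv.Perm (Fin (p + p)), M = ptrans d p (Wfull d p π)}

/-- Extension of an operator on systems `1,…,p-r,1',…,(p-r)'` by the identity on the
remaining systems. -/
noncomputable def embed (d p r : ℕ) (M : Op d (p - r)) : Op d p :=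
  Matrix.of fun xy uv =>
    M (xy.1 ∘ Fin.castLE (Nat.sub_le p r), xy.2 ∘ Fin.castLE (Nat.sub_le p r))
      (uv.1 ∘ Fin.castLE (Nat.sub_le p r), uv.2 ∘ Fin.castLE (Nat.sub_le p r)) *
    (if ∀ j : Fin p, p - r ≤ (j : ℕ) → xy.1 j = uv.1 j ∧ xy.2 j = uv.2 j then 1 else 0)

/-- The ideal `M̃^(k) = span{ V_σ V'_τ Q^(k) V_π V'_ρ }` of `A^d_{p,p}`. -/
noncomputable def Mtil (d p k : ℕ) : Submodule ℂ (Op d p) :=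
  Submodule.span ℂ {M | ∃ σ τ π ρ : Equiv.Perm (Fin p),
    M = VL d p σ * VR d p τ * Qop d p k * (VL d p π * VR d p ρ)}

/-- Labels for the two irreps of `S_2`: symmetric `S` and antisymmetric `A`. -/
inductive SA
  | S
  | A
deriving DecidableEq

instance : Fintype SA := ⟨{SA.S, SA.A}, fun x => by cases x <;> simp⟩

/-- The swap operator on `ℂ^d ⊗ ℂ^d`. -/
noncomputable def Fsw (d : ℕ) : Matrix (Conf d 2) (Conf d 2) ℂ :=
  Matrix.of fun x u => if x 0 = u 1 ∧ x 1 = u 0 then 1 else 0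

/-- Symmetric and antisymmetric projectors on `ℂ^d ⊗ ℂ^d`. -/
noncomputable def Esm (d : ℕ) : SA → Matrix (Conf d 2) (Conf d 2) ℂ
  | SA.S => (2 : ℂ)⁻¹ • (1 + Fsw d)
  | SA.A => (2 : ℂ)⁻¹ • (1 - Fsw d)

/-- `E_i ⊗ E_j` on `H = (ℂ^d)^{⊗4}`. -/
noncomputable def EE (d : ℕ) (i j : SA) : Op d 2 := (Esm d i) ⊗ₖ (Esm d j)

/-- `E_i ⊗ 1` on `H = (ℂ^d)^{⊗4}`. -/
noncomputable def EId (d : ℕ) (i : SA) : Op d 2 :=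
  (Esm d i) ⊗ₖ (1 : Matrix (Conf d 2) (Conf d 2) ℂ)

/-- Multiplicities `m_S = d(d+1)/2`, `m_A = d(d-1)/2` (real valued). -/
noncomputable def mR (d : ℕ) : SA → ℝ
  | SA.S => (d : ℝ) * ((d : ℝ) + 1) / 2
  | SA.A => (d : ℝ) * ((d : ℝ) - 1) / 2

/-- Multiplicities `m_S = d(d+1)/2`, `m_A = d(d-1)/2` (complex valued). -/
noncomputable def mC (d : ℕ) : SA → ℂ
  | SA.S => (d : ℂ) * ((d : ℂ) + 1) / 2
  | SA.A => (d : ℂ) * ((d : ℂ) - 1) / 2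

/-- `V^(1) = d • P⁺_{2,2'}` for `p = 2`. -/
noncomputable def V1 (d : ℕ) : Op d 2 := arc d 2 1 1

/-- `V^(2) = d² • P⁺_{2,2'} P⁺_{1,1'}` for `p = 2`. -/
noncomputable def V2 (d : ℕ) : Op d 2 := arc d 2 1 1 * arc d 2 0 0

/-- `Q^(2) = d^{-2} V^(2)` for `p = 2`. -/
noncomputable def Q2 (d : ℕ) : Op d 2 := ((d : ℂ) ^ 2)⁻¹ • V2 d

/-- `Q^(1) = d^{-1} V^(1) - d^{-2} V^(2)` for `p = 2`. -/
noncomputable def Q1 (d : ℕ) : Op d 2 :=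
  (d : ℂ)⁻¹ • V1 d - ((d : ℂ) ^ 2)⁻¹ • V2 d

/-- `G^(2)_{kl} = (d²/√(m_k m_l)) (E_k ⊗ 1) Q^(2) (E_l ⊗ 1)`. -/
noncomputable def G2 (d : ℕ) (k l : SA) : Op d 2 :=
  ((d : ℂ) ^ 2 / ((Real.sqrt (mR d k * mR d l) : ℝ) : ℂ)) • (EId d k * Q2 d * EId d l)

/-- `G^(2) = G^(2)_{SS} + G^(2)_{AA}`. -/
noncomputable def G2sum (d : ℕ) : Op d 2 := G2 d SA.S SA.S + G2 d SA.A SA.A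

/-- The Gram coefficients `b_{SS} = (d+2)/(4d)`, `b_{SA} = b_{AS} = 1/4`,
`b_{AA} = (d-2)/(4d)`. -/
noncomputable def bc (d : ℕ) : SA → SA → ℂ
  | SA.S, SA.S => ((d : ℂ) + 2) / (4 * (d : ℂ))
  | SA.S, SA.A => 1 / 4
  | SA.A, SA.S => 1 / 4
  | SA.A, SA.A => ((d : ℂ) - 2) / (4 * (d : ℂ))

/-- `Ĝ^(1)_{[ij][kl]} = (E_i ⊗ E_j) Q^(1) (E_k ⊗ E_l)`. -/
noncomputable def Ghat1 (d : ℕ) (i j k l : SA) : Op d 2 :=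
  EE d i j * Q1 d * EE d k l

/-- `G^(1)_{[ij][kl]} = b_{ij}⁻¹ Ĝ^(1)_{[ij][kl]}`. -/
noncomputable def G1 (d : ℕ) (i j k l : SA) : Op d 2 := (bc d i j)⁻¹ • Ghat1 d i j k l

/-- `G^(1) = Σ_{ij} G^(1)_{[ij][ij]}`. -/
noncomputable def G1sum (d : ℕ) : Op d 2 := ∑ i : SA, ∑ j : SA, G1 d i j i j

/-- `G^(0)_{ij} = E_i⊗E_j - b_{ij}⁻¹ (E_i⊗E_j)Q^(1)(E_i⊗E_j)
- δ_{ij} (d²/m_i) (E_i⊗1)Q^(2)(E_i⊗1)`. -/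
noncomputable def G0 (d : ℕ) (i j : SA) : Op d 2 :=
  EE d i j - (bc d i j)⁻¹ • (EE d i j * Q1 d * EE d i j) -
    (if i = j then (d : ℂ) ^ 2 / mC d i else 0) • (EId d i * Q2 d * EId d i)


/-! ### Auxiliary machinery for Statement 12 -/

theorem sum_conf {M : Type*} [AddCommMonoid M] {d : ℕ} (f : (Fin 2 → Fin d) → M) :
    ∑ w : Fin 2 → Fin d, f w = ∑ a : Fin d, ∑ b : Fin d, f ![a, b] := by
  rw [← Fintype.sum_prod_type']
  refine Fintype.sum_equiv (piFinTwoEquiv fun _ => Fin d) _ _ (fun w => ?_)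
  have h : ![w 0, w 1] = w := by ext i; fin_cases i <;> simp
  simp [piFinTwoEquiv, h]

theorem cv0 {α : Type*} (a b : α) : ![a, b] 0 = a := by simp
theorem cv1 {α : Type*} (a b : α) : ![a, b] 1 = b := by simp

theorem eq_comp {d : ℕ} (y v : Fin 2 → Fin d) : y = v ↔ y 0 = v 0 ∧ y 1 = v 1 := by
  constructor
  · rintro rfl; exact ⟨rfl, rfl⟩
  · rintro ⟨h0, h1⟩
    funext i
    match i with
    | 0 => exact h0
    | 1 => exact h1

theorem arc11_apply {d : ℕ} (hd : (d : ℂ) ≠ 0) (x y u v : Conf d 2) :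
    arc d 2 1 1 (x, y) (u, v) =
      if x 1 = y 1 ∧ u 1 = v 1 ∧ x 0 = u 0 ∧ y 0 = v 0 then 1 else 0 := by
  have h01 : (0 : Fin 2) ≠ 1 := by decide
  simp only [arc, Pplus, Matrix.smul_apply, Matrix.of_apply, Fin.forall_fin_two,
    h01, ne_eq, not_true_eq_false, false_implies, and_true, forall_const,
    smul_ite, smul_zero, smul_eq_mul, mul_inv_cancel₀ hd]
  simp [mul_ite, mul_inv_cancel₀ hd]

theorem V1_apply {d : ℕ} (hd : (d : ℂ) ≠ 0) (x y u v : Conf d 2) :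
    V1 d (x, y) (u, v) =
      if x 1 = y 1 ∧ u 1 = v 1 ∧ x 0 = u 0 ∧ y 0 = v 0 then 1 else 0 :=
  arc11_apply hd x y u v

theorem arc00_apply {d : ℕ} (hd : (d : ℂ) ≠ 0) (x y u v : Conf d 2) :
    arc d 2 0 0 (x, y) (u, v) =
      if x 0 = y 0 ∧ u 0 = v 0 ∧ x 1 = u 1 ∧ y 1 = v 1 then 1 else 0 := by
  have h10 : (1 : Fin 2) ≠ 0 := by decide
  simp only [arc, Pplus, Matrix.smul_apply, Matrix.of_apply, Fin.forall_fin_two,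
    h10, ne_eq, not_true_eq_false, false_implies, true_and, forall_const,
    smul_ite, smul_zero, smul_eq_mul]
  simp [mul_ite, mul_inv_cancel₀ hd, and_assoc]

theorem V2_apply {d : ℕ} (hd : (d : ℂ) ≠ 0) (x y u v : Conf d 2) :
    V2 d (x, y) (u, v) =
      if x 0 = y 0 ∧ x 1 = y 1 ∧ u 0 = v 0 ∧ u 1 = v 1 then 1 else 0 := by
  simp only [V2, Matrix.mul_apply, Fintype.sum_prod_type]
  simp only [arc11_apply hd, arc00_apply hd]
  simp only [sum_conf, cv0, cv1]
  simp only [ite_and, Finset.sum_ite_eq, Finset.sum_ite_eq', Finset.mul_sum, Finset.sum_comm,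
    mul_ite, ite_mul, one_mul, mul_one, mul_zero, zero_mul, Finset.sum_const,
    Finset.card_univ, Fintype.card_fin, nsmul_eq_mul, Finset.mem_univ, if_true,
    Finset.sum_ite_irrel, Finset.sum_const_zero]
  split_ifs <;> simp_all

noncomputable def F1 (d : ℕ) : Op d 2 := Fsw d ⊗ₖ 1
noncomputable def F2m (d : ℕ) : Op d 2 := 1 ⊗ₖ Fsw d
noncomputable def FFm (d : ℕ) : Op d 2 := Fsw d ⊗ₖ Fsw d

theorem F1_apply {d : ℕ} (x y u v : Conf d 2) :
    F1 d (x, y) (u, v) =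
      if (x 0 = u 1 ∧ x 1 = u 0) ∧ y 0 = v 0 ∧ y 1 = v 1 then 1 else 0 := by
  simp only [F1, Matrix.kroneckerMap_apply, Fsw, Matrix.of_apply, Matrix.one_apply, eq_comp]
  all_goals split_ifs <;> simp_all [pow_two]

theorem F2m_apply {d : ℕ} (x y u v : Conf d 2) :
    F2m d (x, y) (u, v) =
      if (x 0 = u 0 ∧ x 1 = u 1) ∧ y 0 = v 1 ∧ y 1 = v 0 then 1 else 0 := by
  simp only [F2m, Matrix.kroneckerMap_apply, Fsw, Matrix.of_apply, Matrix.one_apply, eq_comp]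
  all_goals split_ifs <;> simp_all [pow_two]

theorem FFm_apply {d : ℕ} (x y u v : Conf d 2) :
    FFm d (x, y) (u, v) =
      if (x 0 = u 1 ∧ x 1 = u 0) ∧ y 0 = v 1 ∧ y 1 = v 0 then 1 else 0 := by
  simp only [FFm, Matrix.kroneckerMap_apply, Fsw, Matrix.of_apply, Matrix.one_apply, eq_comp]
  all_goals split_ifs <;> simp_all [pow_two]

noncomputable def A1 (d : ℕ) : Op d 2 :=
  Matrix.of fun xy uv =>
    if xy.1 1 = xy.2 1 ∧ xy.1 0 = uv.1 1 ∧ uv.1 0 = uv.2 1 ∧ xy.2 0 = uv.2 0 then (1 : ℂ) else 0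

noncomputable def A2 (d : ℕ) : Op d 2 :=
  Matrix.of fun xy uv =>
    if xy.1 1 = xy.2 1 ∧ xy.1 0 = uv.1 0 ∧ uv.1 1 = uv.2 0 ∧ xy.2 0 = uv.2 1 then (1 : ℂ) else 0

noncomputable def Cm (d : ℕ) : Op d 2 :=
  Matrix.of fun xy uv =>
    if xy.1 1 = xy.2 1 ∧ xy.1 0 = uv.1 1 ∧ uv.1 0 = uv.2 0 ∧ xy.2 0 = uv.2 1 then (1 : ℂ) else 0

noncomputable def Bm (d : ℕ) : Op d 2 :=
  Matrix.of fun xy uv =>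
    if xy.1 0 = xy.2 0 ∧ xy.1 1 = xy.2 1 ∧ uv.1 0 = uv.2 1 ∧ uv.1 1 = uv.2 0 then (1 : ℂ) else 0

theorem mul_V1_V1 {d : ℕ} (hd : (d : ℂ) ≠ 0) :
    V1 d * V1 d = (d : ℂ) • V1 d := by
  ext ⟨x, y⟩ ⟨u, v⟩
  simp only [Matrix.mul_apply, Fintype.sum_prod_type, Matrix.smul_apply, smul_eq_mul,
    V1_apply hd, V2_apply hd, F1_apply, F2m_apply, FFm_apply, A1, A2, Cm, Bm, Matrix.of_apply]
  simp only [sum_conf, cv0, cv1]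
  simp only [ite_and, Finset.sum_ite_eq, Finset.sum_ite_eq', Finset.mul_sum, Finset.sum_comm,
    mul_ite, ite_mul, one_mul, mul_one, mul_zero, zero_mul, Finset.sum_const,
    Finset.card_univ, Fintype.card_fin, nsmul_eq_mul, Finset.mem_univ, if_true,
    Finset.sum_ite_irrel, Finset.sum_const_zero]
  all_goals split_ifs <;> simp_all [pow_two]

theorem mul_V1_V2 {d : ℕ} (hd : (d : ℂ) ≠ 0) :
    V1 d * V2 d = (d : ℂ) • V2 d := by
  ext ⟨x, y⟩ ⟨u, v⟩
  simp only [Matrix.mul_apply, Fintype.sum_prod_type, Matrix.smul_apply, smul_eq_mul,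
    V1_apply hd, V2_apply hd, F1_apply, F2m_apply, FFm_apply, A1, A2, Cm, Bm, Matrix.of_apply]
  simp only [sum_conf, cv0, cv1]
  simp only [ite_and, Finset.sum_ite_eq, Finset.sum_ite_eq', Finset.mul_sum, Finset.sum_comm,
    mul_ite, ite_mul, one_mul, mul_one, mul_zero, zero_mul, Finset.sum_const,
    Finset.card_univ, Fintype.card_fin, nsmul_eq_mul, Finset.mem_univ, if_true,
    Finset.sum_ite_irrel, Finset.sum_const_zero]
  all_goals split_ifs <;> simp_all [pow_two]

theorem mul_V2_V1 {d : ℕ} (hd : (d : ℂ) ≠ 0) :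
    V2 d * V1 d = (d : ℂ) • V2 d := by
  ext ⟨x, y⟩ ⟨u, v⟩
  simp only [Matrix.mul_apply, Fintype.sum_prod_type, Matrix.smul_apply, smul_eq_mul,
    V1_apply hd, V2_apply hd, F1_apply, F2m_apply, FFm_apply, A1, A2, Cm, Bm, Matrix.of_apply]
  simp only [sum_conf, cv0, cv1]
  simp only [ite_and, Finset.sum_ite_eq, Finset.sum_ite_eq', Finset.mul_sum, Finset.sum_comm,
    mul_ite, ite_mul, one_mul, mul_one, mul_zero, zero_mul, Finset.sum_const,
    Finset.card_univ, Fintype.card_fin, nsmul_eq_mul, Finset.mem_univ, if_true,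
    Finset.sum_ite_irrel, Finset.sum_const_zero]
  all_goals split_ifs <;> simp_all [pow_two]

theorem mul_V2_V2 {d : ℕ} (hd : (d : ℂ) ≠ 0) :
    V2 d * V2 d = ((d : ℂ) ^ 2) • V2 d := by
  ext ⟨x, y⟩ ⟨u, v⟩
  simp only [Matrix.mul_apply, Fintype.sum_prod_type, Matrix.smul_apply, smul_eq_mul,
    V1_apply hd, V2_apply hd, F1_apply, F2m_apply, FFm_apply, A1, A2, Cm, Bm, Matrix.of_apply]
  simp only [sum_conf, cv0, cv1]
  simp only [ite_and, Finset.sum_ite_eq, Finset.sum_ite_eq', Finset.mul_sum, Finset.sum_comm,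
    mul_ite, ite_mul, one_mul, mul_one, mul_zero, zero_mul, Finset.sum_const,
    Finset.card_univ, Fintype.card_fin, nsmul_eq_mul, Finset.mem_univ, if_true,
    Finset.sum_ite_irrel, Finset.sum_const_zero]
  all_goals split_ifs <;> simp_all [pow_two]

theorem mul_V1_F1 {d : ℕ} (hd : (d : ℂ) ≠ 0) :
    V1 d * F1 d = A1 d := by
  ext ⟨x, y⟩ ⟨u, v⟩
  simp only [Matrix.mul_apply, Fintype.sum_prod_type, Matrix.smul_apply, smul_eq_mul,
    V1_apply hd, V2_apply hd, F1_apply, F2m_apply, FFm_apply, A1, A2, Cm, Bm, Matrix.of_apply]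
  simp only [sum_conf, cv0, cv1]
  simp only [ite_and, Finset.sum_ite_eq, Finset.sum_ite_eq', Finset.mul_sum, Finset.sum_comm,
    mul_ite, ite_mul, one_mul, mul_one, mul_zero, zero_mul, Finset.sum_const,
    Finset.card_univ, Fintype.card_fin, nsmul_eq_mul, Finset.mem_univ, if_true,
    Finset.sum_ite_irrel, Finset.sum_const_zero]
  all_goals split_ifs <;> simp_all [pow_two]

theorem mul_A1_V1 {d : ℕ} (hd : (d : ℂ) ≠ 0) :
    A1 d * V1 d = V1 d := by
  ext ⟨x, y⟩ ⟨u, v⟩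
  simp only [Matrix.mul_apply, Fintype.sum_prod_type, Matrix.smul_apply, smul_eq_mul,
    V1_apply hd, V2_apply hd, F1_apply, F2m_apply, FFm_apply, A1, A2, Cm, Bm, Matrix.of_apply]
  simp only [sum_conf, cv0, cv1]
  simp only [ite_and, Finset.sum_ite_eq, Finset.sum_ite_eq', Finset.mul_sum, Finset.sum_comm,
    mul_ite, ite_mul, one_mul, mul_one, mul_zero, zero_mul, Finset.sum_const,
    Finset.card_univ, Fintype.card_fin, nsmul_eq_mul, Finset.mem_univ, if_true,
    Finset.sum_ite_irrel, Finset.sum_const_zero]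
  all_goals split_ifs <;> simp_all [pow_two]

theorem mul_A1_V2 {d : ℕ} (hd : (d : ℂ) ≠ 0) :
    A1 d * V2 d = V2 d := by
  ext ⟨x, y⟩ ⟨u, v⟩
  simp only [Matrix.mul_apply, Fintype.sum_prod_type, Matrix.smul_apply, smul_eq_mul,
    V1_apply hd, V2_apply hd, F1_apply, F2m_apply, FFm_apply, A1, A2, Cm, Bm, Matrix.of_apply]
  simp only [sum_conf, cv0, cv1]
  simp only [ite_and, Finset.sum_ite_eq, Finset.sum_ite_eq', Finset.mul_sum, Finset.sum_comm,
    mul_ite, ite_mul, one_mul, mul_one, mul_zero, zero_mul, Finset.sum_const,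
    Finset.card_univ, Fintype.card_fin, nsmul_eq_mul, Finset.mem_univ, if_true,
    Finset.sum_ite_irrel, Finset.sum_const_zero]
  all_goals split_ifs <;> simp_all [pow_two]

theorem mul_V2_F1 {d : ℕ} (hd : (d : ℂ) ≠ 0) :
    V2 d * F1 d = Bm d := by
  ext ⟨x, y⟩ ⟨u, v⟩
  simp only [Matrix.mul_apply, Fintype.sum_prod_type, Matrix.smul_apply, smul_eq_mul,
    V1_apply hd, V2_apply hd, F1_apply, F2m_apply, FFm_apply, A1, A2, Cm, Bm, Matrix.of_apply]
  simp only [sum_conf, cv0, cv1]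
  simp only [ite_and, Finset.sum_ite_eq, Finset.sum_ite_eq', Finset.mul_sum, Finset.sum_comm,
    mul_ite, ite_mul, one_mul, mul_one, mul_zero, zero_mul, Finset.sum_const,
    Finset.card_univ, Fintype.card_fin, nsmul_eq_mul, Finset.mem_univ, if_true,
    Finset.sum_ite_irrel, Finset.sum_const_zero]
  all_goals split_ifs <;> simp_all [pow_two]

theorem mul_B_V1 {d : ℕ} (hd : (d : ℂ) ≠ 0) :
    Bm d * V1 d = V2 d := by
  ext ⟨x, y⟩ ⟨u, v⟩
  simp only [Matrix.mul_apply, Fintype.sum_prod_type, Matrix.smul_apply, smul_eq_mul,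
    V1_apply hd, V2_apply hd, F1_apply, F2m_apply, FFm_apply, A1, A2, Cm, Bm, Matrix.of_apply]
  simp only [sum_conf, cv0, cv1]
  simp only [ite_and, Finset.sum_ite_eq, Finset.sum_ite_eq', Finset.mul_sum, Finset.sum_comm,
    mul_ite, ite_mul, one_mul, mul_one, mul_zero, zero_mul, Finset.sum_const,
    Finset.card_univ, Fintype.card_fin, nsmul_eq_mul, Finset.mem_univ, if_true,
    Finset.sum_ite_irrel, Finset.sum_const_zero]
  all_goals split_ifs <;> simp_all [pow_two]

theorem mul_B_V2 {d : ℕ} (hd : (d : ℂ) ≠ 0) :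
    Bm d * V2 d = (d : ℂ) • V2 d := by
  ext ⟨x, y⟩ ⟨u, v⟩
  simp only [Matrix.mul_apply, Fintype.sum_prod_type, Matrix.smul_apply, smul_eq_mul,
    V1_apply hd, V2_apply hd, F1_apply, F2m_apply, FFm_apply, A1, A2, Cm, Bm, Matrix.of_apply]
  simp only [sum_conf, cv0, cv1]
  simp only [ite_and, Finset.sum_ite_eq, Finset.sum_ite_eq', Finset.mul_sum, Finset.sum_comm,
    mul_ite, ite_mul, one_mul, mul_one, mul_zero, zero_mul, Finset.sum_const,
    Finset.card_univ, Fintype.card_fin, nsmul_eq_mul, Finset.mem_univ, if_true,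
    Finset.sum_ite_irrel, Finset.sum_const_zero]
  all_goals split_ifs <;> simp_all [pow_two]

theorem mul_V1_F2 {d : ℕ} (hd : (d : ℂ) ≠ 0) :
    V1 d * F2m d = A2 d := by
  ext ⟨x, y⟩ ⟨u, v⟩
  simp only [Matrix.mul_apply, Fintype.sum_prod_type, Matrix.smul_apply, smul_eq_mul,
    V1_apply hd, V2_apply hd, F1_apply, F2m_apply, FFm_apply, A1, A2, Cm, Bm, Matrix.of_apply]
  simp only [sum_conf, cv0, cv1]
  simp only [ite_and, Finset.sum_ite_eq, Finset.sum_ite_eq', Finset.mul_sum, Finset.sum_comm,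
    mul_ite, ite_mul, one_mul, mul_one, mul_zero, zero_mul, Finset.sum_const,
    Finset.card_univ, Fintype.card_fin, nsmul_eq_mul, Finset.mem_univ, if_true,
    Finset.sum_ite_irrel, Finset.sum_const_zero]
  all_goals split_ifs <;> simp_all [pow_two]

theorem mul_A2_V1 {d : ℕ} (hd : (d : ℂ) ≠ 0) :
    A2 d * V1 d = V1 d := by
  ext ⟨x, y⟩ ⟨u, v⟩
  simp only [Matrix.mul_apply, Fintype.sum_prod_type, Matrix.smul_apply, smul_eq_mul,
    V1_apply hd, V2_apply hd, F1_apply, F2m_apply, FFm_apply, A1, A2, Cm, Bm, Matrix.of_apply]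
  simp only [sum_conf, cv0, cv1]
  simp only [ite_and, Finset.sum_ite_eq, Finset.sum_ite_eq', Finset.mul_sum, Finset.sum_comm,
    mul_ite, ite_mul, one_mul, mul_one, mul_zero, zero_mul, Finset.sum_const,
    Finset.card_univ, Fintype.card_fin, nsmul_eq_mul, Finset.mem_univ, if_true,
    Finset.sum_ite_irrel, Finset.sum_const_zero]
  all_goals split_ifs <;> simp_all [pow_two]

theorem mul_A2_V2 {d : ℕ} (hd : (d : ℂ) ≠ 0) :
    A2 d * V2 d = V2 d := by
  ext ⟨x, y⟩ ⟨u, v⟩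
  simp only [Matrix.mul_apply, Fintype.sum_prod_type, Matrix.smul_apply, smul_eq_mul,
    V1_apply hd, V2_apply hd, F1_apply, F2m_apply, FFm_apply, A1, A2, Cm, Bm, Matrix.of_apply]
  simp only [sum_conf, cv0, cv1]
  simp only [ite_and, Finset.sum_ite_eq, Finset.sum_ite_eq', Finset.mul_sum, Finset.sum_comm,
    mul_ite, ite_mul, one_mul, mul_one, mul_zero, zero_mul, Finset.sum_const,
    Finset.card_univ, Fintype.card_fin, nsmul_eq_mul, Finset.mem_univ, if_true,
    Finset.sum_ite_irrel, Finset.sum_const_zero]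
  all_goals split_ifs <;> simp_all [pow_two]

theorem mul_V2_F2 {d : ℕ} (hd : (d : ℂ) ≠ 0) :
    V2 d * F2m d = Bm d := by
  ext ⟨x, y⟩ ⟨u, v⟩
  simp only [Matrix.mul_apply, Fintype.sum_prod_type, Matrix.smul_apply, smul_eq_mul,
    V1_apply hd, V2_apply hd, F1_apply, F2m_apply, FFm_apply, A1, A2, Cm, Bm, Matrix.of_apply]
  simp only [sum_conf, cv0, cv1]
  simp only [ite_and, Finset.sum_ite_eq, Finset.sum_ite_eq', Finset.mul_sum, Finset.sum_comm,
    mul_ite, ite_mul, one_mul, mul_one, mul_zero, zero_mul, Finset.sum_const,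
    Finset.card_univ, Fintype.card_fin, nsmul_eq_mul, Finset.mem_univ, if_true,
    Finset.sum_ite_irrel, Finset.sum_const_zero]
  all_goals split_ifs <;> simp_all [pow_two]

theorem mul_V1_FF {d : ℕ} (hd : (d : ℂ) ≠ 0) :
    V1 d * FFm d = Cm d := by
  ext ⟨x, y⟩ ⟨u, v⟩
  simp only [Matrix.mul_apply, Fintype.sum_prod_type, Matrix.smul_apply, smul_eq_mul,
    V1_apply hd, V2_apply hd, F1_apply, F2m_apply, FFm_apply, A1, A2, Cm, Bm, Matrix.of_apply]
  simp only [sum_conf, cv0, cv1]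
  simp only [ite_and, Finset.sum_ite_eq, Finset.sum_ite_eq', Finset.mul_sum, Finset.sum_comm,
    mul_ite, ite_mul, one_mul, mul_one, mul_zero, zero_mul, Finset.sum_const,
    Finset.card_univ, Fintype.card_fin, nsmul_eq_mul, Finset.mem_univ, if_true,
    Finset.sum_ite_irrel, Finset.sum_const_zero]
  all_goals split_ifs <;> simp_all [pow_two]

theorem mul_C_V1 {d : ℕ} (hd : (d : ℂ) ≠ 0) :
    Cm d * V1 d = V2 d := by
  ext ⟨x, y⟩ ⟨u, v⟩
  simp only [Matrix.mul_apply, Fintype.sum_prod_type, Matrix.smul_apply, smul_eq_mul,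
    V1_apply hd, V2_apply hd, F1_apply, F2m_apply, FFm_apply, A1, A2, Cm, Bm, Matrix.of_apply]
  simp only [sum_conf, cv0, cv1]
  simp only [ite_and, Finset.sum_ite_eq, Finset.sum_ite_eq', Finset.mul_sum, Finset.sum_comm,
    mul_ite, ite_mul, one_mul, mul_one, mul_zero, zero_mul, Finset.sum_const,
    Finset.card_univ, Fintype.card_fin, nsmul_eq_mul, Finset.mem_univ, if_true,
    Finset.sum_ite_irrel, Finset.sum_const_zero]
  all_goals split_ifs <;> simp_all [pow_two]

theorem mul_C_V2 {d : ℕ} (hd : (d : ℂ) ≠ 0) :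
    Cm d * V2 d = (d : ℂ) • V2 d := by
  ext ⟨x, y⟩ ⟨u, v⟩
  simp only [Matrix.mul_apply, Fintype.sum_prod_type, Matrix.smul_apply, smul_eq_mul,
    V1_apply hd, V2_apply hd, F1_apply, F2m_apply, FFm_apply, A1, A2, Cm, Bm, Matrix.of_apply]
  simp only [sum_conf, cv0, cv1]
  simp only [ite_and, Finset.sum_ite_eq, Finset.sum_ite_eq', Finset.mul_sum, Finset.sum_comm,
    mul_ite, ite_mul, one_mul, mul_one, mul_zero, zero_mul, Finset.sum_const,
    Finset.card_univ, Fintype.card_fin, nsmul_eq_mul, Finset.mem_univ, if_true,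
    Finset.sum_ite_irrel, Finset.sum_const_zero]
  all_goals split_ifs <;> simp_all [pow_two]

theorem mul_V2_FF {d : ℕ} (hd : (d : ℂ) ≠ 0) :
    V2 d * FFm d = V2 d := by
  ext ⟨x, y⟩ ⟨u, v⟩
  simp only [Matrix.mul_apply, Fintype.sum_prod_type, Matrix.smul_apply, smul_eq_mul,
    V1_apply hd, V2_apply hd, F1_apply, F2m_apply, FFm_apply, A1, A2, Cm, Bm, Matrix.of_apply]
  simp only [sum_conf, cv0, cv1]
  simp only [ite_and, Finset.sum_ite_eq, Finset.sum_ite_eq', Finset.mul_sum, Finset.sum_comm,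
    mul_ite, ite_mul, one_mul, mul_one, mul_zero, zero_mul, Finset.sum_const,
    Finset.card_univ, Fintype.card_fin, nsmul_eq_mul, Finset.mem_univ, if_true,
    Finset.sum_ite_irrel, Finset.sum_const_zero]
  all_goals split_ifs <;> simp_all [pow_two]

theorem Q1_eq (d : ℕ) : Q1 d = (d : ℂ)⁻¹ • V1 d - ((d : ℂ) ^ 2)⁻¹ • V2 d := rfl

theorem Q1_mul_Q1 {d : ℕ} (hd : (d : ℂ) ≠ 0) : Q1 d * Q1 d = Q1 d := by
  simp only [Q1_eq, sub_mul, mul_sub, smul_mul_assoc, mul_smul_comm,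
    mul_V1_V1 hd, mul_V1_V2 hd, mul_V2_V1 hd, mul_V2_V2 hd, smul_smul]
  match_scalars <;> field_simp <;> ring_nf <;> simp [← mul_pow, mul_inv_cancel₀ hd, mul_inv_cancel₀ (pow_ne_zero 10 hd)]

theorem Q1_F1_Q1 {d : ℕ} (hd : (d : ℂ) ≠ 0) :
    Q1 d * F1 d * Q1 d = (d : ℂ)⁻¹ • Q1 d := by
  simp only [Q1_eq, sub_mul, mul_sub, smul_mul_assoc, mul_smul_comm, smul_sub, smul_smul,
    mul_V1_F1 hd, mul_V2_F1 hd, mul_A1_V1 hd, mul_A1_V2 hd, mul_B_V1 hd, mul_B_V2 hd]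
  match_scalars <;> field_simp <;> ring_nf <;> simp [← mul_pow, mul_inv_cancel₀ hd, mul_inv_cancel₀ (pow_ne_zero 10 hd)]

theorem Q1_F2_Q1 {d : ℕ} (hd : (d : ℂ) ≠ 0) :
    Q1 d * F2m d * Q1 d = (d : ℂ)⁻¹ • Q1 d := by
  simp only [Q1_eq, sub_mul, mul_sub, smul_mul_assoc, mul_smul_comm, smul_sub, smul_smul,
    mul_V1_F2 hd, mul_V2_F2 hd, mul_A2_V1 hd, mul_A2_V2 hd, mul_B_V1 hd, mul_B_V2 hd]
  match_scalars <;> field_simp <;> ring_nf <;> simp [← mul_pow, mul_inv_cancel₀ hd, mul_inv_cancel₀ (pow_ne_zero 10 hd)]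

theorem Q1_FF_Q1 {d : ℕ} (hd : (d : ℂ) ≠ 0) :
    Q1 d * FFm d * Q1 d = 0 := by
  simp only [Q1_eq, sub_mul, mul_sub, smul_mul_assoc, mul_smul_comm, smul_sub, smul_smul,
    mul_V1_FF hd, mul_V2_FF hd, mul_C_V1 hd, mul_C_V2 hd, mul_V2_V1 hd, mul_V2_V2 hd]
  match_scalars <;> field_simp <;> ring_nf <;> simp [← mul_pow, mul_inv_cancel₀ hd, mul_inv_cancel₀ (pow_ne_zero 10 hd)]

theorem Fsw_mul_Fsw {d : ℕ} : Fsw d * Fsw d = 1 := by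
  ext x u
  simp only [Matrix.mul_apply, Fsw, Matrix.of_apply, Matrix.one_apply, eq_comp]
  simp only [sum_conf, cv0, cv1]
  simp only [ite_and, Finset.sum_ite_eq, Finset.sum_ite_eq', Finset.mul_sum, Finset.sum_comm,
    mul_ite, ite_mul, one_mul, mul_one, mul_zero, zero_mul, Finset.sum_const,
    Finset.card_univ, Fintype.card_fin, nsmul_eq_mul, Finset.mem_univ, if_true,
    Finset.sum_ite_irrel, Finset.sum_const_zero]
  all_goals split_ifs <;> simp_all

theorem Esm_eq {d : ℕ} (i : SA) :
    Esm d i = (2 : ℂ)⁻¹ • ((1 : Matrix (Conf d 2) (Conf d 2) ℂ) +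
      (if i = SA.S then 1 else -1 : ℂ) • Fsw d) := by
  cases i <;> simp [Esm, sub_eq_add_neg]

theorem Esm_mul_Esm {d : ℕ} (i k : SA) :
    Esm d i * Esm d k = if i = k then Esm d i else 0 := by
  cases i <;> cases k <;>
    simp only [Esm_eq, smul_mul_assoc, mul_smul_comm, add_mul, mul_add,
      mul_one, one_mul, Fsw_mul_Fsw, smul_smul, reduceCtorEq, reduceIte, if_true, if_false] <;>
    match_scalars <;> ring

theorem EE_mul_EE {d : ℕ} (i j k l : SA) :
    EE d i j * EE d k l = if i = k ∧ j = l then EE d i j else 0 := by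
  simp only [EE, ← Matrix.mul_kronecker_mul, Esm_mul_Esm]
  by_cases h1 : i = k <;> by_cases h2 : j = l <;>
    simp [h1, h2, Matrix.zero_kronecker, Matrix.kronecker_zero]

theorem EE_expand {d : ℕ} (i j : SA) :
    EE d i j = (4 : ℂ)⁻¹ •
      ((1 : Op d 2) + (if i = SA.S then 1 else -1 : ℂ) • F1 d +
        (if j = SA.S then 1 else -1 : ℂ) • F2m d +
        ((if i = SA.S then 1 else -1 : ℂ) * (if j = SA.S then 1 else -1 : ℂ)) • FFm d) := by
  simp only [EE, Esm_eq, F1, F2m, FFm, Matrix.smul_kronecker, Matrix.kronecker_smul,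
    Matrix.add_kronecker, Matrix.kronecker_add, Matrix.one_kronecker_one, smul_smul, smul_add]
  match_scalars <;> ring

theorem Q1_EE_Q1 {d : ℕ} (hd : (d : ℂ) ≠ 0) (i j : SA) :
    Q1 d * EE d i j * Q1 d = bc d i j • Q1 d := by
  rw [EE_expand]
  simp only [mul_smul_comm, smul_mul_assoc, mul_add, add_mul, mul_one, one_mul]
  rw [show Q1 d * Q1 d = Q1 d from Q1_mul_Q1 hd]
  have h1 := Q1_F1_Q1 hd
  have h2 := Q1_F2_Q1 hd
  have h3 := Q1_FF_Q1 hd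
  rw [h1, h2, h3]
  cases i <;> cases j <;>
    simp only [bc, reduceCtorEq, reduceIte, smul_zero, add_zero, smul_smul, one_mul,
      mul_one, neg_mul, mul_neg, neg_neg, one_smul, neg_smul] <;>
    match_scalars <;> field_simp <;> ring

theorem Ghat1_quasi_aux {d : ℕ} (hd : (d : ℂ) ≠ 0) (a b i j k l u v : SA) :
    Ghat1 d a b i j * Ghat1 d k l u v =
      (if i = k ∧ j = l then bc d i j else 0) • Ghat1 d a b u v := by
  simp only [Ghat1]
  have key : EE d a b * Q1 d * EE d i j * (EE d k l * Q1 d * EE d u v) =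
      EE d a b * Q1 d * (EE d i j * EE d k l) * Q1 d * EE d u v := by
    simp only [mul_assoc]
  rw [key, EE_mul_EE]
  by_cases h : i = k ∧ j = l
  · rw [if_pos h, if_pos h]
    have key2 : EE d a b * Q1 d * EE d i j * Q1 d * EE d u v =
        EE d a b * (Q1 d * EE d i j * Q1 d) * EE d u v := by
      simp only [mul_assoc]
    rw [key2, Q1_EE_Q1 hd i j]
    simp only [mul_smul_comm, smul_mul_assoc]
  · rw [if_neg h, if_neg h]
    simp

/-- quasi-matrix multiplication in `M̃^(1)`:
`Ĝ^(1)_{[ab][ij]} Ĝ^(1)_{[kl][pq]} = δ_{ik} δ_{jl} b_{ij} Ĝ^(1)_{[ab][pq]}`;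
equivalently `Q^(1) (E_i⊗E_j) Q^(1) = b_{ij} Q^(1)`. -/
theorem Ghat1_quasi_multiplication (d : ℕ) (hd : 2 ≤ d) :
    (∀ a b i j k l u v : SA,
      Ghat1 d a b i j * Ghat1 d k l u v =
        (if i = k ∧ j = l then bc d i j else 0) • Ghat1 d a b u v) ∧
    (∀ i j : SA, Q1 d * EE d i j * Q1 d = bc d i j • Q1 d) := by
  have hd0 : (d : ℂ) ≠ 0 := Nat.cast_ne_zero.mpr (by omega)
  exact ⟨fun a b i j k l u v => Ghat1_quasi_aux hd0 a b i j k l u v,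
    fun i j => Q1_EE_Q1 hd0 i j⟩

end WBA
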